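/- Let T: X → X and S: Y → Y be homeomorphisms of compact metric spaces, π: X → Y a continuous surjection with π∘T = S∘π, and ν an ergodic S-invariant Borel probability measure on Y such that |π⁻¹(y)| = d for ν-a.e. y, where d ∈ ℕ is finite. Let λ be any ergodic d-fold separating π-relative joining over ν. Then the canonical lift satisfies ℓ_π(ν) = (1/d) Σ_{i=1}^{d} p_i λ, where p_i λ denotes the i-th coordinate marginal of λ; consequently, with μ₁, …, μ_k the distinct coordinate marginals of λ and m_i the number of coordinates whose marginal is μ_i, the ergodic decomposition of ℓ_π(ν) is Σ_{i=1}^{k} (m_i/d) μ_i. -/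

import Mathlib

open MeasureTheory Set Filter
open scoped ENNReal

/-- The canonical lift `ℓ_π(ν)` (defined by
`ℓ(s) = (1/d) ∫ |π⁻¹(y) ∩ s| dν(y)`) equals the average `(1/d) ∑ᵢ pᵢ λ` of the coordinate
marginals of any ergodic `d`-fold separating relative joining `λ` over `ν`; consequently,
if `μ₁, …, μ_k` are the distinct coordinate marginals of `λ` and `mᵢ` the number of
coordinates with marginal `μᵢ`, then each `μᵢ` is ergodic and
`ℓ_π(ν) = ∑ᵢ (mᵢ/d) μᵢ` is the ergodic decomposition of the canonical lift. -/

lemma count_lemma {X : Type*} {d : ℕ} (x : Fin d → X) (F : Set X)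
    (hR : Set.range x ⊆ F) (hinj : Function.Injective x) (hF : F.encard = d)
    (s : Set X) :
    ((F ∩ s).encard : ℝ≥0∞) = ∑ j : Fin d, s.indicator 1 (x j) := by
  classical
  have hre : (Set.range x).encard = d := by
    rw [← Set.image_univ, hinj.encard_image, Set.encard_univ]
    simp
  have hrange : Set.range x = F := by
    refine Set.Finite.eq_of_subset_of_encard_le ?_ hR ?_
    · exact Set.finite_of_encard_eq_coe hre
    · rw [hF, hre]
  have h1 : F ∩ s = x '' (x ⁻¹' s) := by
    rw [Set.image_preimage_eq_inter_range, hrange, Set.inter_comm]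
  have h2 : (x ⁻¹' s) = ↑(Finset.univ.filter fun j => x j ∈ s) := by
    ext j; simp
  rw [h1, hinj.encard_image, h2, Set.encard_coe_eq_coe_finsetCard]
  have : ∑ j : Fin d, s.indicator (1 : X → ℝ≥0∞) (x j)
      = ∑ j : Fin d, (if x j ∈ s then (1:ℝ≥0∞) else 0) := by
    simp [Set.indicator_apply]
  rw [this, Finset.sum_boole]
  norm_cast

lemma ergodic_marginal {X : Type*} [MeasurableSpace X] {d : ℕ}
    {T : X → X} (hT : Measurable T)
    (lam : Measure (Fin d → X))
    (hlamerg : Ergodic (fun x i => T (x i)) lam) (j : Fin d) :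
    Ergodic T (lam.map (fun x => x j)) := by
  have hp : Measurable (fun x : Fin d → X => x j) := measurable_pi_apply j
  have hΦ : Measurable (fun x : Fin d → X => fun i => T (x i)) :=
    measurable_pi_lambda _ fun i => hT.comp (measurable_pi_apply i)
  constructor
  · refine ⟨hT, ?_⟩
    rw [Measure.map_map hT hp]
    show Measure.map ((fun x : Fin d → X => x j) ∘ (fun x i => T (x i))) lam = _
    rw [← Measure.map_map hp hΦ, hlamerg.toMeasurePreserving.map_eq]
  · refine ⟨fun s hs hs' => ?_⟩
    rw [eventuallyConst_set']
    have hA : MeasurableSet ((fun x : Fin d → X => x j) ⁻¹' s) := hp hs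
    have hA' : (fun x : Fin d → X => fun i => T (x i)) ⁻¹' ((fun x : Fin d → X => x j) ⁻¹' s)
        = (fun x : Fin d → X => x j) ⁻¹' s := by
      have : (fun x : Fin d → X => fun i => T (x i)) ⁻¹' ((fun x : Fin d → X => x j) ⁻¹' s)
          = (fun x : Fin d → X => x j) ⁻¹' (T ⁻¹' s) := rfl
      rw [this, hs']
    rcases hlamerg.toPreErgodic.ae_empty_or_univ hA hA' with h | h
    · left
      rw [ae_eq_empty] at h ⊢
      rw [Measure.map_apply hp hs]; exact h
    · right
      rw [ae_eq_univ] at h ⊢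
      rw [Measure.map_apply hp hs.compl]
      exact h

theorem canonical_lift_ergodic_decomposition
    {X Y : Type*} [MetricSpace X] [CompactSpace X] [MetricSpace Y] [CompactSpace Y]
    [MeasurableSpace X] [BorelSpace X] [MeasurableSpace Y] [BorelSpace Y]
    (T : X ≃ₜ X) (S : Y ≃ₜ Y) (π : X → Y)
    (hπc : Continuous π) (hπs : Function.Surjective π)
    (hcomm : π ∘ T = S ∘ π)
    (ν : Measure Y) [IsProbabilityMeasure ν] (hνerg : Ergodic S ν)
    (d : ℕ) (hd : 0 < d) (hfib : ∀ᵐ y ∂ν, (π ⁻¹' {y}).encard = d)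
    (lam : Measure (Fin d → X)) [IsProbabilityMeasure lam]
    (hlamerg : Ergodic (fun x i => T (x i)) lam)
    (hlamfib : lam {x | (∀ i j, π (x i) = π (x j)) ∧ ∀ i j, i ≠ j → x i ≠ x j} = 1)
    (hlamover : ∀ i : Fin d, lam.map (fun x => π (x i)) = ν)
    (ell : Measure X)
    (hell : ∀ s : Set X, MeasurableSet s →
      ell s = (∫⁻ y, ((π ⁻¹' {y} ∩ s).encard : ℝ≥0∞) ∂ν) / d)
    (k : ℕ) (μs : Fin k → Measure X) (hμsinj : Function.Injective μs)
    (hμsmarg : ∀ i : Fin k, ∃ j : Fin d, lam.map (fun x => x j) = μs i)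
    (hmargμs : ∀ j : Fin d, ∃ i : Fin k, lam.map (fun x => x j) = μs i)
    (m : Fin k → ℕ)
    (hm : ∀ i, m i = {j : Fin d | lam.map (fun x => x j) = μs i}.ncard) :
    ell = (d : ℝ≥0∞)⁻¹ • ∑ j : Fin d, lam.map (fun x => x j) ∧
    (∀ i : Fin k, Ergodic T (μs i)) ∧
    ell = ∑ i : Fin k, ((m i : ℝ≥0∞) / d) • μs i := by
  classical
  have hp : ∀ j : Fin d, Measurable (fun x : Fin d → X => x j) := measurable_pi_apply
  set i0 : Fin d := ⟨0, hd⟩ with hi0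
  have hf0 : Measurable (fun x : Fin d → X => π (x i0)) :=
    hπc.measurable.comp (hp i0)
  have hdne : (d : ℝ≥0∞) ≠ 0 := Nat.cast_ne_zero.mpr hd.ne'
  have hdnt : (d : ℝ≥0∞) ≠ ⊤ := ENNReal.natCast_ne_top d
  -- measurability of the good set
  have hA : MeasurableSet {x : Fin d → X | ∀ i j, π (x i) = π (x j)} := by
    have : {x : Fin d → X | ∀ i j, π (x i) = π (x j)}
        = ⋂ i, ⋂ j, {x : Fin d → X | π (x i) = π (x j)} := by
      ext x; simp
    rw [this]
    refine MeasurableSet.iInter fun i => MeasurableSet.iInter fun j => ?_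
    exact (isClosed_eq (hπc.comp (continuous_apply i))
      (hπc.comp (continuous_apply j))).measurableSet
  have hB : MeasurableSet {x : Fin d → X | ∀ i j, i ≠ j → x i ≠ x j} := by
    have : {x : Fin d → X | ∀ i j, i ≠ j → x i ≠ x j}
        = ⋂ i, ⋂ j, {x : Fin d → X | i ≠ j → x i ≠ x j} := by
      ext x; simp
    rw [this]
    refine MeasurableSet.iInter fun i => MeasurableSet.iInter fun j => ?_
    by_cases hij : i = j
    · subst hij
      have : {x : Fin d → X | i ≠ i → x i ≠ x i} = Set.univ := by
        ext x; simp
      rw [this]; exact MeasurableSet.univ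
    · have : {x : Fin d → X | i ≠ j → x i ≠ x j}
          = {x : Fin d → X | x i = x j}ᶜ := by
        ext x; simp [hij]
      rw [this]
      exact ((isClosed_eq (continuous_apply i) (continuous_apply j)).measurableSet).compl
  have hGm : MeasurableSet {x : Fin d → X |
      (∀ i j, π (x i) = π (x j)) ∧ ∀ i j, i ≠ j → x i ≠ x j} := by
    have : {x : Fin d → X | (∀ i j, π (x i) = π (x j)) ∧ ∀ i j, i ≠ j → x i ≠ x j}
        = {x : Fin d → X | ∀ i j, π (x i) = π (x j)}
          ∩ {x : Fin d → X | ∀ i j, i ≠ j → x i ≠ x j} := rfl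
    rw [this]
    exact hA.inter hB
  have hG : ∀ᵐ x ∂lam, (∀ i j, π (x i) = π (x j)) ∧ ∀ i j, i ≠ j → x i ≠ x j := by
    rw [ae_iff]
    have : {x : Fin d → X | ¬((∀ i j, π (x i) = π (x j)) ∧ ∀ i j, i ≠ j → x i ≠ x j)}
        = {x : Fin d → X | (∀ i j, π (x i) = π (x j)) ∧ ∀ i j, i ≠ j → x i ≠ x j}ᶜ := rfl
    rw [this, measure_compl hGm (measure_ne_top _ _), measure_univ, hlamfib, tsub_self]
  have hGf : ∀ᵐ x ∂lam, (π ⁻¹' {π (x i0)}).encard = d := by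
    have h' : ∀ᵐ y ∂(lam.map fun x : Fin d → X => π (x i0)), (π ⁻¹' {y}).encard = d := by
      rw [hlamover i0]; exact hfib
    exact ae_of_ae_map hf0.aemeasurable h'
  -- key a.e. counting identity
  have hae : ∀ᵐ x ∂lam, ∀ s : Set X,
      ((π ⁻¹' {π (x i0)} ∩ s).encard : ℝ≥0∞) = ∑ j : Fin d, s.indicator 1 (x j) := by
    filter_upwards [hG, hGf] with x hx hfx s
    refine count_lemma x (π ⁻¹' {π (x i0)}) ?_ ?_ hfx s
    · rintro _ ⟨j, rfl⟩
      simp [hx.1 j i0]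
    · intro i j hij
      by_contra hne
      exact hx.2 i j hne hij
  -- lintegral computation for measurable sets
  have hint : ∀ s : Set X, MeasurableSet s →
      (∫⁻ x, ∑ j : Fin d, s.indicator (1 : X → ℝ≥0∞) (x j) ∂lam)
        = ∑ j : Fin d, lam ((fun x : Fin d → X => x j) ⁻¹' s) := by
    intro s hs
    rw [lintegral_finset_sum]
    · refine Finset.sum_congr rfl fun j _ => ?_
      have : (fun x : Fin d → X => s.indicator (1 : X → ℝ≥0∞) (x j))
          = ((fun x : Fin d → X => x j) ⁻¹' s).indicator (1 : (Fin d → X) → ℝ≥0∞) := by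
        ext x
        simp [Set.indicator_apply, Set.mem_preimage]
      rw [this, lintegral_indicator_one ((hp j) hs)]
    · intro j _
      exact (measurable_const.indicator hs).comp (hp j)
  -- the bound
  set R : Measure X := (d : ℝ≥0∞)⁻¹ • ∑ j : Fin d, lam.map (fun x => x j) with hR
  have hRapp : ∀ s : Set X, MeasurableSet s →
      R s = (d : ℝ≥0∞)⁻¹ * ∑ j : Fin d, lam ((fun x : Fin d → X => x j) ⁻¹' s) := by
    intro s hs
    rw [hR]
    simp only [Measure.smul_apply, smul_eq_mul, Measure.finset_sum_apply]
    congr 1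
    exact Finset.sum_congr rfl fun j _ => Measure.map_apply (hp j) hs
  have hle : ∀ s : Set X, MeasurableSet s → ell s ≤ R s := by
    intro s hs
    rw [hell s hs, hRapp s hs]
    rw [ENNReal.div_eq_inv_mul]
    refine mul_le_mul_right ?_ _
    calc ∫⁻ y, ((π ⁻¹' {y} ∩ s).encard : ℝ≥0∞) ∂ν
        = ∫⁻ y, ((π ⁻¹' {y} ∩ s).encard : ℝ≥0∞) ∂(lam.map (fun x => π (x i0))) := by
          rw [hlamover i0]
      _ ≤ ∫⁻ x, ((π ⁻¹' {π (x i0)} ∩ s).encard : ℝ≥0∞) ∂lam :=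
          lintegral_map_le _ _
      _ = ∫⁻ x, ∑ j : Fin d, s.indicator (1 : X → ℝ≥0∞) (x j) ∂lam :=
          lintegral_congr_ae (hae.mono fun x hx => hx s)
      _ = ∑ j : Fin d, lam ((fun x : Fin d → X => x j) ⁻¹' s) := hint s hs
  -- total masses
  have hellu : ell Set.univ = 1 := by
    rw [hell Set.univ MeasurableSet.univ]
    have h1 : ∫⁻ y, ((π ⁻¹' {y} ∩ Set.univ).encard : ℝ≥0∞) ∂ν
        = ∫⁻ _, (d : ℝ≥0∞) ∂ν := by
      refine lintegral_congr_ae (hfib.mono fun y hy => ?_)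
      simp [Set.inter_univ, hy]
    rw [h1, lintegral_const, measure_univ, mul_one, ENNReal.div_self hdne hdnt]
  have hRu : R Set.univ = 1 := by
    rw [hRapp Set.univ MeasurableSet.univ]
    simp only [Set.preimage_univ, measure_univ, Finset.sum_const, Finset.card_univ,
      Fintype.card_fin, nsmul_eq_mul, mul_one]
    exact ENNReal.inv_mul_cancel hdne hdnt
  -- first conjunct
  have hfirst : ell = R := by
    refine Measure.ext fun s hs => ?_
    have h1 := hle s hs
    have h2 := hle sᶜ hs.compl
    have e1 : ell s + ell sᶜ = 1 := by
      rw [measure_add_measure_compl hs, hellu]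
    have e2 : R s + R sᶜ = 1 := by
      rw [measure_add_measure_compl hs, hRu]
    by_contra hne
    have hlt : ell s < R s := h1.lt_of_ne hne
    have : ell s + ell sᶜ < R s + R sᶜ :=
      ENNReal.add_lt_add_of_lt_of_le (by
        intro h
        rw [h] at e1
        simp at e1) hlt h2
    rw [e1, e2] at this
    exact lt_irrefl _ this
  refine ⟨hfirst, ?_, ?_⟩
  · intro i
    obtain ⟨j, hj⟩ := hμsmarg i
    rw [← hj]
    exact ergodic_marginal T.continuous.measurable lam hlamerg j
  · -- third conjunct
    choose c hc using hmargμs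
    have hsum : ∑ j : Fin d, lam.map (fun x => x j) = ∑ i : Fin k, (m i) • μs i := by
      rw [← Finset.sum_fiberwise Finset.univ c (fun j => lam.map (fun x : Fin d → X => x j))]
      refine Finset.sum_congr rfl fun i _ => ?_
      have hmi : m i = (Finset.univ.filter fun j => c j = i).card := by
        rw [hm i]
        have hset : {j : Fin d | lam.map (fun x => x j) = μs i}
            = ↑(Finset.univ.filter fun j => c j = i) := by
          ext j
          simp only [Set.mem_setOf_eq, Finset.coe_filter, Finset.mem_univ, true_and]
          constructor
          · intro h
            exact hμsinj (by rw [← hc j, h])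
          · intro h
            rw [← h, hc j]
        rw [hset, Set.ncard_coe_finset]
      rw [hmi]
      rw [← Finset.sum_const]
      refine Finset.sum_congr rfl fun j hj => ?_
      rw [Finset.mem_filter] at hj
      rw [hc j, hj.2]
    rw [hfirst, hR, hsum, Finset.smul_sum]
    refine Finset.sum_congr rfl fun i _ => ?_
    rw [← Nat.cast_smul_eq_nsmul ℝ≥0∞ (m i) (μs i), smul_smul,
      ENNReal.div_eq_inv_mul]
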